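/- In a commutative differential ℚ-algebra (R, ∂), let λ, F ∈ R and let (D_n)_{n≥0} be elements with D_0 arbitrary. Define ũ_{m,n} = λ^m F^n/(m!n!) (zero for negative indices), Λ_{m,n} = ∑_{m₀=1}^{m} ∑_{n₀=0}^{n} ũ_{m−m₀,n−n₀}·D_{m₀,n₀} for m ≥ 1, Λ_{0,n} = 0, where (D_{m,n}) satisfies ∂D_{m+1,n} = −D_{m,n}·∂λ − D_{m+1,n−1}·∂F for m,n ≥ 0 (with D_{m,n} = 0 for n < 0). Then ∂(Λ_{m,n}) = −∑_{n₀=0}^{n} ũ_{m−1,n−n₀}·D_{0,n₀}·∂λ. -/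

import Mathlib

open Finset

/-- with `ũ_{m,n} = λ^m F^n/(m!n!)` (zero for negative indices),
`D_{m,n}` satisfying `∂D_{m+1,n} = −D_{m,n}∂λ − D_{m+1,n−1}∂F` (and `D_{m,n} = 0` for
`n < 0`), and `Λ_{m,n} = ∑_{m₀=1}^{m}∑_{n₀=0}^{n} ũ_{m−m₀,n−n₀}·D_{m₀,n₀}`, one has
`∂(Λ_{m,n}) = −∑_{n₀=0}^{n} ũ_{m−1,n−n₀}·D_{0,n₀}·∂λ`. -/
theorem stmt_10 {R : Type*} [CommRing R] [Algebra ℚ R] (d : Derivation ℚ R R)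
    (l F : R) (u : ℤ → ℤ → R)
    (hu : ∀ m n : ℤ, u m n = if 0 ≤ m ∧ 0 ≤ n then
      l ^ m.toNat * F ^ n.toNat *
        algebraMap ℚ R (1 / (m.toNat.factorial * n.toNat.factorial)) else 0)
    (D : ℕ → ℤ → R)
    (hDneg : ∀ (m : ℕ) (n : ℤ), n < 0 → D m n = 0)
    (hDrec : ∀ (m : ℕ) (n : ℤ), 0 ≤ n →
      d (D (m + 1) n) = -D m n * d l - D (m + 1) (n - 1) * d F)
    (Λ : ℕ → ℕ → R)
    (hΛ : ∀ m n : ℕ, Λ m n = ∑ m₀ ∈ Icc 1 m, ∑ n₀ ∈ range (n + 1),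
      u ((m : ℤ) - (m₀ : ℤ)) ((n : ℤ) - (n₀ : ℤ)) * D m₀ (n₀ : ℤ)) :
    ∀ m n : ℕ, d (Λ m n) =
      -∑ n₀ ∈ range (n + 1),
        u ((m : ℤ) - 1) ((n : ℤ) - (n₀ : ℤ)) * D 0 (n₀ : ℤ) * d l := by
  classical
  -- vanishing of `u` for negative indices
  have uneg1 : ∀ a b : ℤ, a < 0 → u a b = 0 := fun a b h => by
    rw [hu]; simp [not_le.mpr h]
  have uneg2 : ∀ a b : ℤ, b < 0 → u a b = 0 := fun a b h => by
    rw [hu]; simp [not_le.mpr h]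
  -- factor `u a b = A a * B b`
  set A : ℤ → R := fun a =>
    if 0 ≤ a then l ^ a.toNat * algebraMap ℚ R (1 / a.toNat.factorial) else 0 with hA
  set B : ℤ → R := fun b =>
    if 0 ≤ b then F ^ b.toNat * algebraMap ℚ R (1 / b.toNat.factorial) else 0 with hB
  have huAB : ∀ a b : ℤ, u a b = A a * B b := by
    intro a b
    rw [hu, hA, hB]
    by_cases ha : 0 ≤ a <;> by_cases hb : 0 ≤ b <;> simp [ha, hb]
    ring
  -- derivative of a divided power
  have dpow : ∀ (x : R) (k : ℕ),
      d (x ^ (k+1) * algebraMap ℚ R (1 / (k+1).factorial))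
        = x ^ k * algebraMap ℚ R (1 / k.factorial) * d x := by
    intro x k
    rw [Derivation.leibniz, Derivation.map_algebraMap, Derivation.leibniz_pow]
    have hfac : ((k:R) + 1) * algebraMap ℚ R (1 / (k+1).factorial)
        = algebraMap ℚ R (1 / k.factorial) := by
      have : ((k:R) + 1) = algebraMap ℚ R ((k:ℚ) + 1) := by
        push_cast; simp
      rw [this, ← map_mul]
      congr 1
      rw [Nat.factorial_succ]
      have h1 : ((k:ℚ) + 1) ≠ 0 := by positivity
      have h2 : ((k.factorial : ℚ)) ≠ 0 := by
        exact_mod_cast Nat.cast_ne_zero.mpr k.factorial_ne_zero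
      field_simp
      push_cast; ring
    rw [← hfac]
    simp only [smul_eq_mul, nsmul_eq_mul, Nat.add_sub_cancel]
    push_cast
    ring
  have dA : ∀ a : ℤ, d (A a) = A (a - 1) * d l := by
    intro a
    rcases lt_or_ge a 0 with ha | ha
    · rw [hA]
      simp [not_le.mpr ha, not_le.mpr (by omega : a - 1 < 0)]
      intro h; omega
    · obtain ⟨p, rfl⟩ := Int.eq_ofNat_of_zero_le ha
      cases p with
      | zero => simp [hA]
      | succ k =>
        rw [hA]
        simp only [show (0:ℤ) ≤ ((k+1:ℕ):ℤ) from by positivity,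
          show (0:ℤ) ≤ ((k+1:ℕ):ℤ) - 1 from by push_cast; omega, if_true, if_pos]
        rw [show (((k+1:ℕ):ℤ)).toNat = k + 1 from by simp,
          show (((k+1:ℕ):ℤ) - 1).toNat = k from by simp]
        exact dpow l k
  have dB : ∀ b : ℤ, d (B b) = B (b - 1) * d F := by
    intro b
    rcases lt_or_ge b 0 with hb | hb
    · rw [hB]
      simp [not_le.mpr hb, not_le.mpr (by omega : b - 1 < 0)]
      intro h; omega
    · obtain ⟨p, rfl⟩ := Int.eq_ofNat_of_zero_le hb
      cases p with
      | zero => simp [hB]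
      | succ k =>
        rw [hB]
        simp only [show (0:ℤ) ≤ ((k+1:ℕ):ℤ) from by positivity,
          show (0:ℤ) ≤ ((k+1:ℕ):ℤ) - 1 from by push_cast; omega, if_true, if_pos]
        rw [show (((k+1:ℕ):ℤ)).toNat = k + 1 from by simp,
          show (((k+1:ℕ):ℤ) - 1).toNat = k from by simp]
        exact dpow F k
  -- derivative of `u`
  have du : ∀ a b : ℤ, d (u a b) = u (a-1) b * d l + u a (b-1) * d F := by
    intro a b
    rw [huAB, Derivation.leibniz, dA, dB, huAB, huAB]
    simp only [smul_eq_mul]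
    ring
  -- main computation
  intro m n
  have hΛ' : Λ m n = ∑ i ∈ range m, ∑ j ∈ range (n + 1),
      u ((m : ℤ) - ((i : ℤ) + 1)) ((n : ℤ) - (j : ℤ)) * D (i + 1) (j : ℤ) := by
    rw [hΛ, ← Finset.Ico_add_one_right_eq_Icc, Finset.sum_Ico_eq_sum_range]
    refine Finset.sum_congr rfl fun i _ => Finset.sum_congr rfl fun j _ => ?_
    rw [add_comm 1 i, show ((i + 1 : ℕ) : ℤ) = (i : ℤ) + 1 from by push_cast; ring]
  rw [hΛ', map_sum]
  have key : ∀ i j : ℕ,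
      d (u ((m : ℤ) - ((i : ℤ) + 1)) ((n : ℤ) - (j : ℤ)) * D (i + 1) (j : ℤ)) =
      ((fun k : ℕ => u ((m:ℤ) - (k:ℤ) - 1) ((n:ℤ) - (j:ℤ)) * D k ((j:ℤ)) * d l) (i+1)
        - (fun k : ℕ => u ((m:ℤ) - (k:ℤ) - 1) ((n:ℤ) - (j:ℤ)) * D k ((j:ℤ)) * d l) i)
      + ((fun t : ℕ => u ((m:ℤ) - (i:ℤ) - 1) ((n:ℤ) - (t:ℤ)) * D (i+1) ((t:ℤ) - 1) * d F) (j+1)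
        - (fun t : ℕ => u ((m:ℤ) - (i:ℤ) - 1) ((n:ℤ) - (t:ℤ)) * D (i+1) ((t:ℤ) - 1) * d F) j) := by
    intro i j
    simp only []
    rw [Derivation.leibniz, hDrec i (j:ℤ) (Int.natCast_nonneg j), du]
    simp only [smul_eq_mul]
    push_cast
    ring_nf
  calc ∑ i ∈ range m, d (∑ j ∈ range (n + 1),
        u ((m : ℤ) - ((i : ℤ) + 1)) ((n : ℤ) - (j : ℤ)) * D (i + 1) (j : ℤ))
      = ∑ i ∈ range m, ∑ j ∈ range (n + 1),
        (((fun k : ℕ => u ((m:ℤ) - (k:ℤ) - 1) ((n:ℤ) - (j:ℤ)) * D k ((j:ℤ)) * d l) (i+1)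
          - (fun k : ℕ => u ((m:ℤ) - (k:ℤ) - 1) ((n:ℤ) - (j:ℤ)) * D k ((j:ℤ)) * d l) i)
        + ((fun t : ℕ => u ((m:ℤ) - (i:ℤ) - 1) ((n:ℤ) - (t:ℤ)) * D (i+1) ((t:ℤ) - 1) * d F) (j+1)
          - (fun t : ℕ => u ((m:ℤ) - (i:ℤ) - 1) ((n:ℤ) - (t:ℤ)) * D (i+1) ((t:ℤ) - 1) * d F) j)) := by
        refine Finset.sum_congr rfl fun i _ => ?_
        rw [map_sum]
        exact Finset.sum_congr rfl fun j _ => key i j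
    _ = ∑ i ∈ range m, (∑ j ∈ range (n + 1),
        ((fun k : ℕ => u ((m:ℤ) - (k:ℤ) - 1) ((n:ℤ) - (j:ℤ)) * D k ((j:ℤ)) * d l) (i+1)
          - (fun k : ℕ => u ((m:ℤ) - (k:ℤ) - 1) ((n:ℤ) - (j:ℤ)) * D k ((j:ℤ)) * d l) i)
        + ∑ j ∈ range (n + 1),
        ((fun t : ℕ => u ((m:ℤ) - (i:ℤ) - 1) ((n:ℤ) - (t:ℤ)) * D (i+1) ((t:ℤ) - 1) * d F) (j+1)
          - (fun t : ℕ => u ((m:ℤ) - (i:ℤ) - 1) ((n:ℤ) - (t:ℤ)) * D (i+1) ((t:ℤ) - 1) * d F) j)) := by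
        exact Finset.sum_congr rfl fun i _ => Finset.sum_add_distrib
    _ = ∑ i ∈ range m, ∑ j ∈ range (n + 1),
        ((fun k : ℕ => u ((m:ℤ) - (k:ℤ) - 1) ((n:ℤ) - (j:ℤ)) * D k ((j:ℤ)) * d l) (i+1)
          - (fun k : ℕ => u ((m:ℤ) - (k:ℤ) - 1) ((n:ℤ) - (j:ℤ)) * D k ((j:ℤ)) * d l) i) := by
        refine Finset.sum_congr rfl fun i _ => ?_
        rw [Finset.sum_range_sub
          (fun t : ℕ => u ((m:ℤ) - (i:ℤ) - 1) ((n:ℤ) - (t:ℤ)) * D (i+1) ((t:ℤ) - 1) * d F) (n+1)]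
        have h1 : u ((m:ℤ) - (i:ℤ) - 1) ((n:ℤ) - ((n+1:ℕ):ℤ)) * D (i+1) (((n+1:ℕ):ℤ) - 1) * d F
            = 0 := by
          rw [uneg2 _ _ (by push_cast; omega)]; ring
        have h2 : u ((m:ℤ) - (i:ℤ) - 1) ((n:ℤ) - ((0:ℕ):ℤ)) * D (i+1) (((0:ℕ):ℤ) - 1) * d F
            = 0 := by
          rw [hDneg (i+1) _ (by norm_num)]; ring
        rw [h1, h2, sub_zero]
        simp only [add_zero]
    _ = ∑ j ∈ range (n + 1), ∑ i ∈ range m,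
        ((fun k : ℕ => u ((m:ℤ) - (k:ℤ) - 1) ((n:ℤ) - (j:ℤ)) * D k ((j:ℤ)) * d l) (i+1)
          - (fun k : ℕ => u ((m:ℤ) - (k:ℤ) - 1) ((n:ℤ) - (j:ℤ)) * D k ((j:ℤ)) * d l) i) :=
        Finset.sum_comm
    _ = -∑ n₀ ∈ range (n + 1),
        u ((m : ℤ) - 1) ((n : ℤ) - (n₀ : ℤ)) * D 0 (n₀ : ℤ) * d l := by
        rw [← Finset.sum_neg_distrib]
        refine Finset.sum_congr rfl fun j _ => ?_
        rw [Finset.sum_range_sub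
          (fun k : ℕ => u ((m:ℤ) - (k:ℤ) - 1) ((n:ℤ) - (j:ℤ)) * D k ((j:ℤ)) * d l) m]
        rw [uneg1 _ _ (by omega)]
        rw [show ((m:ℤ) - ((0:ℕ):ℤ) - 1) = (m:ℤ) - 1 from by push_cast; ring]
        ring
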